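/- Every closed convex set K ⊆ ℝ² has only finitely many extreme half-lines. -/

import Mathlib

open Set

abbrev V2 := EuclideanSpace ℝ (Fin 2)

/-- directions of recession -/
def DirIn (K : Set V2) (w : V2) : Prop := ∀ y ∈ K, ∀ t : ℝ, 0 ≤ t → y + t • w ∈ K

def Indep (u v : V2) : Prop := ∀ a b : ℝ, a • u + b • v = 0 → a = 0 ∧ b = 0

lemma DirIn.add {K : Set V2} {u v : V2} (hu : DirIn K u) (hv : DirIn K v) :
    DirIn K (u + v) := by
  intro y hy t ht
  have := hv _ (hu y hy t ht) t ht
  convert this using 1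
  module

lemma DirIn.smul {K : Set V2} {u : V2} (hu : DirIn K u) {c : ℝ} (hc : 0 ≤ c) :
    DirIn K (c • u) := by
  intro y hy t ht
  have := hu y hy (t * c) (mul_nonneg ht hc)
  convert this using 1
  module

lemma indep_symm {u v : V2} (h : Indep u v) : Indep v u := by
  intro a b hab
  have := h b a (by rw [← hab]; abel)
  exact ⟨this.2, this.1⟩

lemma indep_of_not_mul {u d : V2} (hu : u ≠ 0) (h : ¬∃ r : ℝ, d = r • u) : Indep u d := by
  intro a b hab
  by_cases hb : b = 0
  · subst hb
    simp only [zero_smul, add_zero, smul_eq_zero] at hab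
    exact ⟨hab.resolve_right hu, rfl⟩
  · exfalso
    apply h
    refine ⟨-a / b, ?_⟩
    have : b • d = (-a) • u := by
      have : a • u + b • d - a • u = 0 - a • u := by rw [hab]
      simpa [sub_eq_iff_eq_add] using by linear_combination (norm := module) hab
    calc d = b⁻¹ • (b • d) := by rw [smul_smul]; field_simp; simp
    _ = b⁻¹ • ((-a) • u) := by rw [this]
    _ = (-a / b) • u := by rw [smul_smul]; ring_nf

lemma span2 {u v : V2} (h : Indep u v) (d : V2) : ∃ a b : ℝ, d = a • u + b • v := by
  have hv : v ≠ 0 := by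
    intro hv
    exact one_ne_zero (h 0 1 (by simp [hv])).2
  have hli : LinearIndependent ℝ ![u, v] := by
    rw [linearIndependent_fin2]
    refine ⟨by simpa using hv, fun a hav => ?_⟩
    simp only [Matrix.cons_val_one, Matrix.head_cons, Matrix.cons_val_zero] at hav
    exact one_ne_zero (h 1 (-a) (by rw [← hav]; module)).1
  have hsp : Submodule.span ℝ (Set.range ![u, v]) = ⊤ :=
    hli.span_eq_top_of_card_eq_finrank (by simp [finrank_euclideanSpace])
  have hd : d ∈ Submodule.span ℝ ({u, v} : Set V2) := by
    rw [show ({u, v} : Set V2) = Set.range ![u, v] by simp [Matrix.range_cons, Set.pair_comm u v], hsp]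
    trivial
  obtain ⟨a, b, hab⟩ := Submodule.mem_span_pair.mp hd
  exact ⟨a, b, hab.symm⟩

/-- A half-line `ℓ = {x₀ + t • u : t ≥ 0}` (with `u ≠ 0`) is an extreme half-line of a
closed convex set `K` if `ℓ` lies in the boundary of `K` and every open segment of `K`
meeting `ℓ` has both endpoints in `ℓ`. -/
def IsExtremeHalfLine {n : ℕ} (K ℓ : Set (EuclideanSpace ℝ (Fin n))) : Prop :=
  (∃ x₀ u : EuclideanSpace ℝ (Fin n), u ≠ 0 ∧
      ℓ = {p | ∃ t : ℝ, 0 ≤ t ∧ p = x₀ + t • u}) ∧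
    ℓ ⊆ frontier K ∧
    ∀ x ∈ K, ∀ y ∈ K, (openSegment ℝ x y ∩ ℓ).Nonempty → x ∈ ℓ ∧ y ∈ ℓ

/-- the half-line set with basepoint x and direction u -/
def HL (x u : V2) : Set V2 := {p | ∃ t : ℝ, 0 ≤ t ∧ p = x + t • u}

lemma hl_subset_K {K ℓ : Set V2} (hK : IsClosed K) (h : IsExtremeHalfLine K ℓ) : ℓ ⊆ K :=
  fun p hp => hK.frontier_subset (h.2.1 hp)

lemma rec_mem {K : Set V2} (hK : IsClosed K) (hconv : Convex ℝ K) {x u : V2}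
    (hx : ∀ t : ℝ, 0 ≤ t → x + t • u ∈ K) {y : V2} (hy : y ∈ K) : ∀ t : ℝ, 0 ≤ t → y + t • u ∈ K := by
  intro t ht
  have seq : ∀ n : ℕ, y + t • u + (1 / ((n : ℝ) + 1)) • (x - y) ∈ K := by
    intro n
    have hε : (0 : ℝ) < 1 / ((n : ℝ) + 1) := by positivity
    have hε1 : 1 / ((n : ℝ) + 1) ≤ 1 := by
      rw [div_le_one (by positivity)]
      simp [Nat.cast_nonneg]
    have hk : x + (t / (1 / ((n : ℝ) + 1))) • u ∈ K := hx _ (by positivity)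
    have := hconv hy hk (a := 1 - 1 / ((n : ℝ) + 1)) (b := 1 / ((n : ℝ) + 1))
      (by linarith) hε.le (by ring)
    convert this using 1
    match_scalars <;> field_simp <;> ring
  have hlim : Filter.Tendsto (fun n : ℕ => y + t • u + (1 / ((n : ℝ) + 1)) • (x - y))
      Filter.atTop (nhds (y + t • u)) := by
    have h0 : Filter.Tendsto (fun n : ℕ => 1 / ((n : ℝ) + 1)) Filter.atTop (nhds 0) :=
      tendsto_one_div_add_atTop_nhds_zero_nat
    have h1 := h0.smul_const (x - y)
    rw [zero_smul] at h1
    simpa using Filter.Tendsto.add (tendsto_const_nhds (x := y + t • u)) h1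
  exact hK.mem_of_tendsto hlim (Filter.Eventually.of_forall seq)

lemma dirIn_of_rep {K ℓ : Set V2} (hK : IsClosed K) (hconv : Convex ℝ K)
    (h : IsExtremeHalfLine K ℓ) {x u : V2} (hrep : ℓ = HL x u) : DirIn K u := by
  intro y hy t ht
  exact rec_mem hK hconv (x := x)
    (fun s hs => hl_subset_K hK h (by rw [hrep]; exact ⟨s, hs, rfl⟩)) hy t ht

lemma basept_mem {K ℓ : Set V2} (hK : IsClosed K) (h : IsExtremeHalfLine K ℓ) {x u : V2}
    (hrep : ℓ = HL x u) : x ∈ K :=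
  hl_subset_K hK h (by rw [hrep]; exact ⟨0, le_refl 0, by simp⟩)

lemma key {K ℓ : Set V2} (h : IsExtremeHalfLine K ℓ) {x u : V2} (hrep : ℓ = HL x u)
    {p q : V2} (hp : p ∈ K) (hq : q ∈ K) {a b t : ℝ} (ha : 0 < a) (hb : 0 < b)
    (hab : a + b = 1) (ht : 0 ≤ t) (hm : a • p + b • q = x + t • u) :
    ∃ s : ℝ, 0 ≤ s ∧ p = x + s • u := by
  have hmem : (openSegment ℝ p q ∩ ℓ).Nonempty :=
    ⟨x + t • u, ⟨a, b, ha, hb, hab, hm⟩, by rw [hrep]; exact ⟨t, ht, rfl⟩⟩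
  have := (h.2.2 p hp q hq hmem).1
  rw [hrep] at this
  exact this

lemma ext_dir {K ℓ : Set V2} (h : IsExtremeHalfLine K ℓ) {x u : V2} (hrep : ℓ = HL x u)
    {v w : V2} (hv : x + v ∈ K) (hw : x + w ∈ K) (hvw : v + w = (2 : ℝ) • u) :
    ∃ t : ℝ, 0 ≤ t ∧ v = t • u := by
  have hm : (1/2 : ℝ) • (x + v) + (1/2 : ℝ) • (x + w) = x + (1 : ℝ) • u := by
    linear_combination (norm := module) (1/2 : ℝ) • hvw
  obtain ⟨s, hs, hps⟩ := key h hrep hv hw (by norm_num) (by norm_num) (by norm_num)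
    (zero_le_one) hm
  refine ⟨s, hs, ?_⟩
  have : x + v - x = x + s • u - x := by rw [← hps]
  simpa using this

lemma anti_kill {K ℓ : Set V2} (hK : IsClosed K) (h : IsExtremeHalfLine K ℓ) {x u : V2}
    (hrep : ℓ = HL x u) (hu : u ≠ 0) (hdu : DirIn K u) (hneg : DirIn K (-u)) : False := by
  have hxK : x ∈ K := basept_mem hK h hrep
  have hv : x + (-u) ∈ K := by simpa using hneg x hxK 1 zero_le_one
  have hw : x + (3 : ℝ) • u ∈ K := hdu x hxK 3 (by norm_num)
  obtain ⟨t, ht, heq⟩ := ext_dir h hrep hv hw (by module)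
  have h0 : (t + 1) • u = 0 := by linear_combination (norm := module) -heq
  rcases smul_eq_zero.mp h0 with h1 | h1
  · linarith
  · exact hu h1

lemma sameline_half {K ℓ ℓ' : Set V2} (hK : IsClosed K)
    (h : IsExtremeHalfLine K ℓ) (h' : IsExtremeHalfLine K ℓ') {xa xb u : V2} {ca cb : ℝ}
    (hrep : ℓ = HL xa (ca • u)) (hrep' : ℓ' = HL xb (cb • u))
    (hca : 0 < ca) (hcb : 0 < cb) (hu : u ≠ 0) {r : ℝ} (hr : 0 < r)
    (hxb : xb = xa + r • u) : False := by
  have hp : xa + (r / 2) • u ∈ K := by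
    refine hl_subset_K hK h ?_
    rw [hrep]
    exact ⟨r / (2 * ca), by positivity, by rw [smul_smul]; congr 2; field_simp⟩
  have hq : xa + (3 * r / 2) • u ∈ K := by
    refine hl_subset_K hK h' ?_
    rw [hrep']
    refine ⟨r / (2 * cb), by positivity, ?_⟩
    rw [hxb, smul_smul]
    have : r / (2 * cb) * cb = r / 2 := by field_simp
    rw [this]
    module
  have hm : (1/2 : ℝ) • (xa + (r / 2) • u) + (1/2 : ℝ) • (xa + (3 * r / 2) • u)
      = xb + (0 : ℝ) • (cb • u) := by
    rw [hxb]; match_scalars <;> ring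
  obtain ⟨s, hs, heq⟩ := key h' hrep' hp hq (by norm_num) (by norm_num) (by norm_num)
    le_rfl hm
  rw [hxb] at heq
  have h0 : (r / 2 - r - s * cb) • u = 0 := by
    rw [smul_smul] at heq
    linear_combination (norm := module) heq
  rcases smul_eq_zero.mp h0 with h1 | h1
  · nlinarith [mul_nonneg hs hcb.le]
  · exact hu h1

lemma HL_smul_eq {x u : V2} {ca cb : ℝ} (hca : 0 < ca) (hcb : 0 < cb) :
    HL x (ca • u) = HL x (cb • u) := by
  ext p
  constructor
  · rintro ⟨t, ht, rfl⟩
    exact ⟨t * ca / cb, by positivity, by rw [smul_smul, smul_smul]; congr 2; field_simp⟩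
  · rintro ⟨t, ht, rfl⟩
    exact ⟨t * cb / ca, by positivity, by rw [smul_smul, smul_smul]; congr 2; field_simp⟩

lemma collinear_resolve {K ℓ ℓ' : Set V2} (hK : IsClosed K)
    (h : IsExtremeHalfLine K ℓ) (h' : IsExtremeHalfLine K ℓ') {xa xb u : V2} {ca cb : ℝ}
    (hrep : ℓ = HL xa (ca • u)) (hrep' : ℓ' = HL xb (cb • u))
    (hca : 0 < ca) (hcb : 0 < cb) (hu : u ≠ 0) (hne : ℓ ≠ ℓ') {r : ℝ}
    (hr : xb - xa = r • u) : False := by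
  rcases lt_trichotomy r 0 with h1 | h1 | h1
  · refine sameline_half hK h' h hrep' hrep hcb hca hu (r := -r) (by linarith) ?_
    linear_combination (norm := module) -hr
  · apply hne
    have hxb : xb = xa := by
      have : xb - xa = 0 := by rw [hr, h1, zero_smul]
      exact sub_eq_zero.mp this
    rw [hrep, hrep', hxb]
    exact HL_smul_eq hca hcb
  · refine sameline_half hK h h' hrep hrep' hca hcb hu h1 ?_
    linear_combination (norm := module) hr

lemma parallel_kill {K ℓ ℓ' : Set V2} (hK : IsClosed K)
    (h : IsExtremeHalfLine K ℓ) (h' : IsExtremeHalfLine K ℓ') {xa xb u w : V2} {ca cb : ℝ}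
    (hrep : ℓ = HL xa (ca • u)) (hrep' : ℓ' = HL xb (cb • u))
    (hca : 0 < ca) (hcb : 0 < cb)
    (hdu : DirIn K u) (hdw : DirIn K w) (hind : Indep u w) {p q : ℝ} (hq : 0 < q)
    (hd : xb - xa = p • u + q • w) : False := by
  set a : ℝ := max p 0 + 1 with ha_def
  have ha : 0 < a := by positivity
  have hap : p < a := lt_of_le_of_lt (le_max_left p 0) (by simp [ha_def])
  have hxb : xb = xa + p • u + q • w := by linear_combination (norm := module) hd
  have hxbK : xb ∈ K := basept_mem hK h' hrep'
  have hp1 : xa + a • u ∈ K := by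
    refine hl_subset_K hK h ?_
    rw [hrep]
    exact ⟨a / ca, by positivity, by rw [smul_smul, div_mul_cancel₀ _ hca.ne']⟩
  have hq1 : xb + q • w + a • u ∈ K := hdu _ (hdw xb hxbK q hq.le) a ha.le
  have ht : 0 ≤ (2 * a - p) / (2 * cb) := by
    apply div_nonneg _ (by positivity)
    linarith
  have hm : (1/2 : ℝ) • (xa + a • u) + (1/2 : ℝ) • (xb + q • w + a • u)
      = xb + ((2 * a - p) / (2 * cb)) • (cb • u) := by
    have hc1 : (2 * a - p) / (2 * cb) * cb = (2 * a - p) / 2 := by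
      field_simp
    rw [smul_smul, hc1, hxb]
    match_scalars <;> ring
  obtain ⟨s, hs, heq⟩ := key h' hrep' hp1 hq1 (by norm_num) (by norm_num) (by norm_num) ht hm
  rw [hxb, smul_smul] at heq
  have h0 : (a - p - s * cb) • u + (-q) • w = 0 := by
    linear_combination (norm := module) heq
  have := (hind _ _ h0).2
  linarith

lemma between_kill {K ℓa ℓb ℓk : Set V2} (hK : IsClosed K)
    (ha' : IsExtremeHalfLine K ℓa) (hb' : IsExtremeHalfLine K ℓb)
    (hk' : IsExtremeHalfLine K ℓk) {xa xb xk u : V2} {ca cb ck : ℝ}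
    (hrepa : ℓa = HL xa (ca • u)) (hrepb : ℓb = HL xb (cb • u))
    (hrepk : ℓk = HL xk (ck • u))
    (hca : 0 < ca) (hcb : 0 < cb) (hck : 0 < ck) {lam c : ℝ}
    (hl0 : 0 < lam) (hl1 : lam < 1)
    (hcomb : (1 - lam) • xa + lam • xb = xk + c • u)
    (hne : ¬∃ r : ℝ, xa - xk = r • u) : False := by
  set a : ℝ := |c| + 1 with ha_def
  have ha : 0 < a := by positivity
  have hca' : 0 < c + a := by
    have := neg_abs_le c
    simp only [ha_def]
    linarith
  have hpa : xa + a • u ∈ K := by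
    refine hl_subset_K hK ha' ?_
    rw [hrepa]
    exact ⟨a / ca, by positivity, by rw [smul_smul, div_mul_cancel₀ _ hca.ne']⟩
  have hpb : xb + a • u ∈ K := by
    refine hl_subset_K hK hb' ?_
    rw [hrepb]
    exact ⟨a / cb, by positivity, by rw [smul_smul, div_mul_cancel₀ _ hcb.ne']⟩
  have hm : (1 - lam) • (xa + a • u) + lam • (xb + a • u)
      = xk + ((c + a) / ck) • (ck • u) := by
    rw [smul_smul, div_mul_cancel₀ _ hck.ne']
    linear_combination (norm := module) hcomb
  obtain ⟨s, hs, heq⟩ := key hk' hrepk hpa hpb (by linarith) hl0 (by ring)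
    (by positivity) hm
  apply hne
  refine ⟨s * ck - a, ?_⟩
  rw [smul_smul] at heq
  linear_combination (norm := module) heq

lemma pair_rel {K ℓ : Set V2} (hK : IsClosed K) (h : IsExtremeHalfLine K ℓ) {x u : V2}
    (hrep : ℓ = HL x u) (hu : u ≠ 0) {v : V2} (hv0 : v ≠ 0)
    (hdu : DirIn K u) (hdv : DirIn K v) :
    Indep u v ∨ ∃ c : ℝ, 0 < c ∧ v = c • u := by
  by_cases hi : Indep u v
  · exact Or.inl hi
  right
  unfold Indep at hi
  push_neg at hi
  obtain ⟨a, b, hab, hne⟩ := hi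
  have hb : b ≠ 0 := by
    rintro rfl
    have hau : a • u = 0 := by
      have := hab
      simpa using this
    rcases smul_eq_zero.mp hau with h1 | h1
    · exact hne h1 rfl
    · exact hu h1
  have hveq : v = (-a / b) • u := by
    have hbv : b • v = (-a) • u := by linear_combination (norm := module) hab
    calc v = b⁻¹ • (b • v) := by rw [smul_smul]; field_simp; simp
    _ = b⁻¹ • ((-a) • u) := by rw [hbv]
    _ = (-a / b) • u := by rw [smul_smul]; ring_nf
  set c : ℝ := -a / b with hc_def
  have hc0 : c ≠ 0 := by
    rintro h0
    rw [h0, zero_smul] at hveq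
    exact hv0 hveq
  rcases hc0.lt_or_gt with hc | hc
  · exfalso
    have hneg : DirIn K (-u) := by
      have h1 := hdv.smul (c := -c⁻¹) (by
        simp only [Left.nonneg_neg_iff]
        exact (inv_nonpos.mpr hc.le))
      have h2 : (-c⁻¹) • v = -u := by
        rw [hveq, smul_smul]
        have : -c⁻¹ * c = -1 := by field_simp
        rw [this, neg_one_smul]
      rwa [h2] at h1
    exact anti_kill hK h hrep hu hdu hneg
  · exact ⟨c, hc, hveq⟩

lemma pp_kill {K ℓ ℓ' : Set V2} (hK : IsClosed K)
    (h : IsExtremeHalfLine K ℓ) (h' : IsExtremeHalfLine K ℓ') {xa xb u w : V2} {ca cb : ℝ}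
    (hrepa : ℓ = HL xa (ca • u)) (hrepb : ℓ' = HL xb (cb • u))
    (hca : 0 < ca) (hcb : 0 < cb) (hu : u ≠ 0) (hne : ℓ ≠ ℓ')
    (hdu : DirIn K u) (hdw : DirIn K w) (hind : Indep u w) : False := by
  by_cases hline : ∃ r : ℝ, xb - xa = r • u
  · obtain ⟨r, hr⟩ := hline
    exact collinear_resolve hK h h' hrepa hrepb hca hcb hu hne hr
  · obtain ⟨p, q, hpq⟩ := span2 hind (xb - xa)
    have hq0 : q ≠ 0 := by
      rintro rfl
      exact hline ⟨p, by simpa using hpq⟩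
    rcases hq0.lt_or_gt with hq | hq
    · refine parallel_kill hK h' h hrepb hrepa hcb hca hdu hdw hind (p := -p) (q := -q)
        (by linarith) ?_
      linear_combination (norm := module) -hpq
    · exact parallel_kill hK h h' hrepa hrepb hca hcb hdu hdw hind hq hpq

lemma all_par_kill {K ℓ₁ ℓ₂ ℓ₃ : Set V2} (hK : IsClosed K)
    (h1 : IsExtremeHalfLine K ℓ₁) (h2 : IsExtremeHalfLine K ℓ₂)
    (h3 : IsExtremeHalfLine K ℓ₃) {x₁ x₂ x₃ u : V2} {c₁ c₂ c₃ : ℝ}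
    (hrep₁ : ℓ₁ = HL x₁ (c₁ • u)) (hrep₂ : ℓ₂ = HL x₂ (c₂ • u))
    (hrep₃ : ℓ₃ = HL x₃ (c₃ • u))
    (hc₁ : 0 < c₁) (hc₂ : 0 < c₂) (hc₃ : 0 < c₃) (hu : u ≠ 0)
    (h12 : ℓ₁ ≠ ℓ₂) (h13 : ℓ₁ ≠ ℓ₃) (h23 : ℓ₂ ≠ ℓ₃) : False := by
  by_cases l12 : ∃ r : ℝ, x₂ - x₁ = r • u
  · obtain ⟨r, hr⟩ := l12
    exact collinear_resolve hK h1 h2 hrep₁ hrep₂ hc₁ hc₂ hu h12 hr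
  by_cases l13 : ∃ r : ℝ, x₃ - x₁ = r • u
  · obtain ⟨r, hr⟩ := l13
    exact collinear_resolve hK h1 h3 hrep₁ hrep₃ hc₁ hc₃ hu h13 hr
  by_cases l23 : ∃ r : ℝ, x₃ - x₂ = r • u
  · obtain ⟨r, hr⟩ := l23
    exact collinear_resolve hK h2 h3 hrep₂ hrep₃ hc₂ hc₃ hu h23 hr
  have hind : Indep u (x₂ - x₁) := indep_of_not_mul hu l12
  obtain ⟨α, β, hd3⟩ := span2 hind (x₃ - x₁)
  have hx3 : x₃ = x₁ + α • u + β • (x₂ - x₁) := by linear_combination (norm := module) hd3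
  have hβ0 : β ≠ 0 := by
    rintro rfl
    exact l13 ⟨α, by simpa using hd3⟩
  have hβ1 : β ≠ 1 := by
    rintro rfl
    exact l23 ⟨α, by linear_combination (norm := module) hd3⟩
  rcases lt_trichotomy β 0 with hβ | hβ | hβ
  · -- x₁ is between: lam = 1/(1-β)
    have h1β : (0:ℝ) < 1 - β := by linarith
    refine between_kill hK h2 h3 h1 hrep₂ hrep₃ hrep₁ hc₂ hc₃ hc₁
      (lam := 1 / (1 - β)) (c := (1 / (1 - β)) * α) (by positivity)
      (by rw [div_lt_one h1β]; linarith) ?_ l12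
    rw [hx3]
    match_scalars <;> field_simp <;> ring
  · exact hβ0 hβ
  · rcases lt_trichotomy β 1 with hβ' | hβ' | hβ'
    · -- x₃ is between: lam = β
      refine between_kill hK h1 h2 h3 hrep₁ hrep₂ hrep₃ hc₁ hc₂ hc₃
        (lam := β) (c := -α) hβ hβ' ?_ ?_
      · rw [hx3]; match_scalars <;> ring
      · rintro ⟨r, hr⟩
        exact l13 ⟨-r, by linear_combination (norm := module) -hr⟩
    · exact hβ1 hβ'
    · -- x₂ is between: lam = 1/β
      refine between_kill hK h1 h3 h2 hrep₁ hrep₃ hrep₂ hc₁ hc₃ hc₂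
        (lam := 1 / β) (c := α / β) (by positivity)
        (by rw [div_lt_one (by linarith)]; linarith) ?_ ?_
      · rw [hx3]
        match_scalars <;> field_simp <;> ring
      · rintro ⟨r, hr⟩
        exact l12 ⟨-r, by linear_combination (norm := module) -hr⟩

lemma no_three {K ℓ₁ ℓ₂ ℓ₃ : Set V2} (hK : IsClosed K) (hconv : Convex ℝ K)
    (h1 : IsExtremeHalfLine K ℓ₁) (h2 : IsExtremeHalfLine K ℓ₂)
    (h3 : IsExtremeHalfLine K ℓ₃)
    (h12 : ℓ₁ ≠ ℓ₂) (h13 : ℓ₁ ≠ ℓ₃) (h23 : ℓ₂ ≠ ℓ₃) : False := by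
  obtain ⟨x₁, u₁, hu₁, hrep₁⟩ := h1.1
  obtain ⟨x₂, u₂, hu₂, hrep₂⟩ := h2.1
  obtain ⟨x₃, u₃, hu₃, hrep₃⟩ := h3.1
  replace hrep₁ : ℓ₁ = HL x₁ u₁ := hrep₁
  replace hrep₂ : ℓ₂ = HL x₂ u₂ := hrep₂
  replace hrep₃ : ℓ₃ = HL x₃ u₃ := hrep₃
  have hd1 : DirIn K u₁ := dirIn_of_rep hK hconv h1 hrep₁
  have hd2 : DirIn K u₂ := dirIn_of_rep hK hconv h2 hrep₂
  have hd3 : DirIn K u₃ := dirIn_of_rep hK hconv h3 hrep₃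
  have hrep₁' : ℓ₁ = HL x₁ ((1 : ℝ) • u₁) := by rw [one_smul]; exact hrep₁
  have hrep₂' : ℓ₂ = HL x₂ ((1 : ℝ) • u₂) := by rw [one_smul]; exact hrep₂
  rcases pair_rel hK h1 hrep₁ hu₁ hu₂ hd1 hd2 with i12 | ⟨c₂, hc₂, hu₂eq⟩
  · rcases pair_rel hK h1 hrep₁ hu₁ hu₃ hd1 hd3 with i13 | ⟨c₃, hc₃, hu₃eq⟩
    · rcases pair_rel hK h2 hrep₂ hu₂ hu₃ hd2 hd3 with i23 | ⟨c₃, hc₃, hu₃eq⟩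
      · -- all three pairwise independent
        obtain ⟨α, β, hcomb⟩ := span2 i12 u₃
        have hα0 : α ≠ 0 := by
          rintro rfl
          have := (i23 β (-1) (by rw [hcomb]; module)).2
          norm_num at this
        have hβ0 : β ≠ 0 := by
          rintro rfl
          have := (i13 α (-1) (by rw [hcomb]; module)).2
          norm_num at this
        rcases hα0.lt_or_gt with hα | hα <;> rcases hβ0.lt_or_gt with hβ | hβ
        · -- α < 0, β < 0 : -u₃ is a recession direction
          have hadd := (hd1.smul (c := -α) (by linarith)).add (hd2.smul (c := -β) (by linarith))
          have he : (-α) • u₁ + (-β) • u₂ = -u₃ := by rw [hcomb]; module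
          rw [he] at hadd
          exact anti_kill hK h3 hrep₃ hu₃ hd3 hadd
        · -- α < 0, β > 0 : u₂ is positive combination of u₁, u₃
          have hv : x₂ + (2 / β) • u₃ ∈ K :=
            hd3 x₂ (basept_mem hK h2 hrep₂) _ (by positivity)
          have hw : x₂ + (-2 * α / β) • u₁ ∈ K :=
            hd1 x₂ (basept_mem hK h2 hrep₂) _ (div_nonneg (by linarith) (by linarith))
          obtain ⟨t, ht, heq⟩ := ext_dir h2 hrep₂ hv hw (by
            rw [hcomb]; match_scalars <;> field_simp <;> ring)
          have h0 : t • u₂ + (-(2 / β)) • u₃ = 0 := by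
            linear_combination (norm := module) -heq
          have := (i23 _ _ h0).2
          have h2β : (2 : ℝ) / β > 0 := by positivity
          linarith [neg_eq_zero.mp this]
        · -- α > 0, β < 0 : u₁ is positive combination of u₃, u₂
          have hv : x₁ + (2 / α) • u₃ ∈ K :=
            hd3 x₁ (basept_mem hK h1 hrep₁) _ (by positivity)
          have hw : x₁ + (-2 * β / α) • u₂ ∈ K :=
            hd2 x₁ (basept_mem hK h1 hrep₁) _ (div_nonneg (by linarith) (by linarith))
          obtain ⟨t, ht, heq⟩ := ext_dir h1 hrep₁ hv hw (by
            rw [hcomb]; match_scalars <;> field_simp <;> ring)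
          have h0 : t • u₁ + (-(2 / α)) • u₃ = 0 := by
            linear_combination (norm := module) -heq
          have := (i13 _ _ h0).2
          have h2α : (2 : ℝ) / α > 0 := by positivity
          linarith [neg_eq_zero.mp this]
        · -- α > 0, β > 0
          have hv : x₃ + (2 * α) • u₁ ∈ K :=
            hd1 x₃ (basept_mem hK h3 hrep₃) _ (by positivity)
          have hw : x₃ + (2 * β) • u₂ ∈ K :=
            hd2 x₃ (basept_mem hK h3 hrep₃) _ (by positivity)
          obtain ⟨t, ht, heq⟩ := ext_dir h3 hrep₃ hv hw (by rw [hcomb]; module)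
          rw [hcomb] at heq
          have h0 : (2 * α - t * α) • u₁ + (-(t * β)) • u₂ = 0 := by
            linear_combination (norm := module) heq
          obtain ⟨e1, e2⟩ := i12 _ _ h0
          have ht0 : t = 0 := by
            rcases mul_eq_zero.mp (neg_eq_zero.mp e2) with h' | h'
            · exact h'
            · exact absurd h' hβ0
          rw [ht0] at e1
          linarith
      · -- pair (2,3) parallel, w := u₁
        exact pp_kill hK h2 h3 hrep₂' (by rw [hrep₃, hu₃eq]) one_pos hc₃ hu₂ h23 hd2 hd1
          (indep_symm i12)
    · -- pair (1,3) parallel, w := u₂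
      exact pp_kill hK h1 h3 hrep₁' (by rw [hrep₃, hu₃eq]) one_pos hc₃ hu₁ h13 hd1 hd2 i12
  · rcases pair_rel hK h1 hrep₁ hu₁ hu₃ hd1 hd3 with i13 | ⟨c₃, hc₃, hu₃eq⟩
    · -- pair (1,2) parallel, w := u₃
      exact pp_kill hK h1 h2 hrep₁' (by rw [hrep₂, hu₂eq]) one_pos hc₂ hu₁ h12 hd1 hd3 i13
    · -- all parallel
      exact all_par_kill hK h1 h2 h3 hrep₁' (by rw [hrep₂, hu₂eq]) (by rw [hrep₃, hu₃eq])
        one_pos hc₂ hc₃ hu₁ h12 h13 h23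

/-- Every closed convex set in `ℝ²` has only finitely many extreme half-lines. -/
theorem finite_extreme_halfLines
    (K : Set (EuclideanSpace ℝ (Fin 2))) (hK : IsClosed K) (hconv : Convex ℝ K) :
    {ℓ : Set (EuclideanSpace ℝ (Fin 2)) | IsExtremeHalfLine K ℓ}.Finite := by
  by_contra hfin
  have hinf : {ℓ : Set (EuclideanSpace ℝ (Fin 2)) | IsExtremeHalfLine K ℓ}.Infinite := hfin
  obtain ⟨T, hTs, hTfin, hTcard⟩ := hinf.exists_subset_ncard_eq 3
  rw [Set.ncard_eq_three] at hTcard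
  obtain ⟨a, b, c, hab, hac, hbc, rfl⟩ := hTcard
  exact no_three hK hconv (hTs (by simp)) (hTs (by simp)) (hTs (by simp)) hab hac hbc
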